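/- arXiv:2104.10946 — 9 statements merged into one kernel-verified Lean document; each statement's English description precedes it below -/
import Mathlib

section
/- Let R ∈ ℂ^{n×n} be a unitary k-upper Hessenberg matrix and let U ∈ ℂ^{n×n} be unitary. Then there exist unitary matrices V and S such that RU = VS, where S is a unitary k-upper Hessenberg matrix and V is block diagonal of the form V = diag(I_k, V̂) with V̂ ∈ ℂ^{(n−k)×(n−k)} unitary. -/
open Matrix

/-- A matrix is `k`-upper Hessenberg if its entries vanish below the `k`-th subdiagonal. -/
def IsKUpperHessenberg {m : ℕ} (k : ℕ) (R : Matrix (Fin m) (Fin m) ℂ) : Prop :=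
  ∀ i j : Fin m, (j : ℕ) + k < (i : ℕ) → R i j = 0

/-- **Swap lemma (upper version).** If `R` is a unitary `k`-upper Hessenberg matrix and `U`
is unitary, then `R * U = V * S` where `S` is a unitary `k`-upper Hessenberg matrix and
`V` is a unitary block diagonal matrix of the form `diag(I_k, V̂)`. -/
theorem swap_upper_hessenberg_unitary {n k : ℕ} (hk : 1 ≤ k) (hkn : k < n)
    (R U : Matrix (Fin n) (Fin n) ℂ)
    (hR : R ∈ Matrix.unitaryGroup (Fin n) ℂ)
    (hRHess : IsKUpperHessenberg k R)
    (hU : U ∈ Matrix.unitaryGroup (Fin n) ℂ) :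
    ∃ V S : Matrix (Fin n) (Fin n) ℂ,
      V ∈ Matrix.unitaryGroup (Fin n) ℂ ∧
      S ∈ Matrix.unitaryGroup (Fin n) ℂ ∧
      IsKUpperHessenberg k S ∧
      (∀ i j : Fin n, (i : ℕ) < k ∨ (j : ℕ) < k → V i j = if i = j then 1 else 0) ∧
      R * U = V * S := by
  classical
  set A : Matrix (Fin n) (Fin n) ℂ := R * U with hAdef
  have hA : A ∈ Matrix.unitaryGroup (Fin n) ℂ := mul_mem hR hU
  set m : ℕ := n - k with hmdef
  have hkm : k + m = n := by omega
  have i1 : WellFoundedLT (Fin m) := inferInstance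
  -- columns of the bottom block of A
  let f : Fin m → EuclideanSpace ℂ (Fin m) :=
    fun j => WithLp.toLp 2 (fun r : Fin m => A ⟨k + (r : ℕ), by omega⟩ ⟨(j : ℕ), by omega⟩)
  have hdim : Module.finrank ℂ (EuclideanSpace ℂ (Fin m)) = Fintype.card (Fin m) := by simp
  let b : OrthonormalBasis (Fin m) ℂ (EuclideanSpace ℂ (Fin m)) :=
    InnerProductSpace.gramSchmidtOrthonormalBasis hdim f
  -- the block-diagonal matrix V whose last m columns are the vectors of b
  let V : Matrix (Fin n) (Fin n) ℂ := fun i j =>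
    if h : (i : ℕ) < k ∨ (j : ℕ) < k then (if i = j then 1 else 0)
    else b ⟨(j : ℕ) - k, by omega⟩ ⟨(i : ℕ) - k, by omega⟩
  have hVid : ∀ i j : Fin n, (i : ℕ) < k ∨ (j : ℕ) < k → V i j = if i = j then 1 else 0 := by
    intro i j h
    simp only [V, dif_pos h]
  have hVlow : ∀ (r i : Fin n), k ≤ (r : ℕ) → k ≤ (i : ℕ) →
      V r i = b ⟨(i : ℕ) - k, by omega⟩ ⟨(r : ℕ) - k, by omega⟩ := by
    intro r i hr hi
    have h : ¬ ((r : ℕ) < k ∨ (i : ℕ) < k) := by omega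
    simp only [V, dif_neg h]
  -- splitting sums over Fin n
  have hsum : ∀ g : Fin n → ℂ,
      (∑ i : Fin n, g i) =
        (∑ a : Fin k, g ⟨(a : ℕ), by omega⟩) + ∑ a : Fin m, g ⟨k + (a : ℕ), by omega⟩ := by
    intro g
    rw [← Equiv.sum_comp (finSumFinEquiv.trans (finCongr hkm)) g, Fintype.sum_sum_type]
    congr 1
  -- inner products as sums
  have hinner : ∀ (x y : EuclideanSpace ℂ (Fin m)),
      (inner ℂ x y : ℂ) = ∑ a : Fin m, star (x a) * y a := by
    intro x y
    rw [PiLp.inner_apply]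
    simp only [RCLike.inner_apply, starRingEnd_apply]
    exact Finset.sum_congr rfl fun a _ => mul_comm _ _
  -- V is unitary
  have hVV : star V * V = 1 := by
    ext j j'
    rw [Matrix.mul_apply, Matrix.one_apply]
    simp only [Matrix.star_apply]
    by_cases hj : (j : ℕ) < k
    · rw [Finset.sum_eq_single j]
      · rw [hVid j j (Or.inl hj), hVid j j' (Or.inl hj)]
        simp
      · intro i _ hij
        rw [hVid i j (Or.inr hj), if_neg hij]
        simp
      · simp
    · by_cases hj' : (j' : ℕ) < k
      · rw [Finset.sum_eq_single j']
        · rw [hVid j' j' (Or.inl hj'), hVid j' j (Or.inl hj')]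
          have h1 : j' ≠ j := fun h => hj (h ▸ hj')
          have h2 : ¬ j = j' := fun h => hj (h ▸ hj')
          rw [if_neg h1, if_neg h2]
          simp
        · intro i _ hij
          rw [hVid i j' (Or.inr hj'), if_neg hij]
          simp
        · simp
      · -- both columns in the lower block
        rw [hsum]
        have h1 : (∑ a : Fin k, star (V ⟨(a : ℕ), by omega⟩ j) * V ⟨(a : ℕ), by omega⟩ j') = 0 := by
          refine Finset.sum_eq_zero fun a _ => ?_
          have hne : (⟨(a : ℕ), by omega⟩ : Fin n) ≠ j := by
            intro h
            apply hj
            rw [← h]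
            exact a.isLt
          rw [hVid _ j (Or.inl a.isLt), if_neg hne]
          simp
        rw [h1, zero_add]
        have h2 : ∀ a : Fin m,
            V (⟨k + (a : ℕ), by omega⟩ : Fin n) j = b ⟨(j : ℕ) - k, by omega⟩ a := by
          intro a
          rw [hVlow _ _ (by simp) (le_of_not_gt hj)]
          exact congrArg _ (Fin.ext (by simp only [Fin.val_mk]; omega))
        have h2' : ∀ a : Fin m,
            V (⟨k + (a : ℕ), by omega⟩ : Fin n) j' = b ⟨(j' : ℕ) - k, by omega⟩ a := by
          intro a
          rw [hVlow _ _ (by simp) (le_of_not_gt hj')]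
          exact congrArg _ (Fin.ext (by simp only [Fin.val_mk]; omega))
        calc (∑ a : Fin m, star (V ⟨k + (a : ℕ), by omega⟩ j) * V ⟨k + (a : ℕ), by omega⟩ j')
            = ∑ a : Fin m, star (b ⟨(j : ℕ) - k, by omega⟩ a) * b ⟨(j' : ℕ) - k, by omega⟩ a := by
              refine Finset.sum_congr rfl fun a _ => ?_
              rw [h2 a, h2' a]
          _ = inner ℂ (b ⟨(j : ℕ) - k, by omega⟩) (b ⟨(j' : ℕ) - k, by omega⟩) :=
              (hinner (b ⟨(j : ℕ) - k, by omega⟩) (b ⟨(j' : ℕ) - k, by omega⟩)).symm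
          _ = if j = j' then 1 else 0 := by
              rw [orthonormal_iff_ite.mp b.orthonormal]
              by_cases h : j = j'
              · simp [h]
              · have hne : (⟨(j : ℕ) - k, by omega⟩ : Fin m) ≠ ⟨(j' : ℕ) - k, by omega⟩ := by
                  intro hc
                  have hval : (j : ℕ) - k = (j' : ℕ) - k := congrArg Fin.val hc
                  exact h (Fin.ext (by omega))
                simp [hne, h]
  have hV : V ∈ Matrix.unitaryGroup (Fin n) ℂ := Matrix.mem_unitaryGroup_iff'.mpr hVV
  set S : Matrix (Fin n) (Fin n) ℂ := star V * A with hSdef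
  have hS : S ∈ Matrix.unitaryGroup (Fin n) ℂ := mul_mem (Unitary.star_mem hV) hA
  refine ⟨V, S, hV, hS, ?_, hVid, ?_⟩
  · -- S is k-upper Hessenberg
    intro i j hij
    have hik : k ≤ (i : ℕ) := by omega
    rw [hSdef, Matrix.mul_apply]
    simp only [Matrix.star_apply]
    rw [hsum]
    have h1 : (∑ a : Fin k, star (V ⟨(a : ℕ), by omega⟩ i) * A ⟨(a : ℕ), by omega⟩ j) = 0 := by
      refine Finset.sum_eq_zero fun a _ => ?_
      have hne : (⟨(a : ℕ), by omega⟩ : Fin n) ≠ i := by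
        intro h
        have : (i : ℕ) = (a : ℕ) := by rw [← h]
        omega
      rw [hVid _ i (Or.inl a.isLt), if_neg hne]
      simp
    rw [h1, zero_add]
    have hjm : (j : ℕ) < m := by omega
    have h2 : ∀ a : Fin m,
        V (⟨k + (a : ℕ), by omega⟩ : Fin n) i = b ⟨(i : ℕ) - k, by omega⟩ a := by
      intro a
      rw [hVlow _ _ (by simp) hik]
      exact congrArg _ (Fin.ext (by simp only [Fin.val_mk]; omega))
    have h3 : ∀ a : Fin m, A (⟨k + (a : ℕ), by omega⟩ : Fin n) j = f ⟨(j : ℕ), hjm⟩ a :=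
      fun a => rfl
    have htri : (inner ℂ (b ⟨(i : ℕ) - k, by omega⟩) (f ⟨(j : ℕ), hjm⟩) : ℂ) = 0 :=
      InnerProductSpace.gramSchmidtOrthonormalBasis_inv_triangular hdim f (by
        show ((⟨(j : ℕ), hjm⟩ : Fin m) : ℕ) < (i : ℕ) - k
        simp only
        omega)
    calc (∑ a : Fin m, star (V ⟨k + (a : ℕ), by omega⟩ i) * A ⟨k + (a : ℕ), by omega⟩ j)
        = ∑ a : Fin m, star (b ⟨(i : ℕ) - k, by omega⟩ a) * f ⟨(j : ℕ), hjm⟩ a := by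
          refine Finset.sum_congr rfl fun a _ => ?_
          rw [h2 a, h3 a]
      _ = inner ℂ (b ⟨(i : ℕ) - k, by omega⟩) (f ⟨(j : ℕ), hjm⟩) :=
          (hinner (b ⟨(i : ℕ) - k, by omega⟩) (f ⟨(j : ℕ), hjm⟩)).symm
      _ = 0 := htri
  · -- R * U = V * S
    rw [hSdef, ← Matrix.mul_assoc, mul_eq_one_comm.mp hVV, Matrix.one_mul]
end

section
/- Let L ∈ ℂ^{n×n} be a unitary k-lower Hessenberg matrix and let U ∈ ℂ^{n×n} be unitary. Then there exist unitary matrices V and M such that LU = VM, where M is a unitary k-lower Hessenberg matrix and V is block diagonal of the form V = diag(V̂, I_k) with V̂ ∈ ℂ^{(n−k)×(n−k)} unitary. -/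
open Matrix

/-- A matrix is `k`-lower Hessenberg if its entries vanish above the `k`-th superdiagonal. -/
def IsKLowerHessenberg {m : ℕ} (k : ℕ) (L : Matrix (Fin m) (Fin m) ℂ) : Prop :=
  ∀ i j : Fin m, (i : ℕ) + k < (j : ℕ) → L i j = 0

/-- **Swap lemma (lower version).** If `L` is a unitary `k`-lower Hessenberg matrix and `U`
is unitary, then `L * U = V * M` where `M` is a unitary `k`-lower Hessenberg matrix and
`V` is a unitary block diagonal matrix of the form `diag(V̂, I_k)`. -/
theorem swap_lower_hessenberg_unitary {n k : ℕ} (hk : 1 ≤ k) (hkn : k < n)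
    (L U : Matrix (Fin n) (Fin n) ℂ)
    (hL : L ∈ Matrix.unitaryGroup (Fin n) ℂ)
    (hLHess : IsKLowerHessenberg k L)
    (hU : U ∈ Matrix.unitaryGroup (Fin n) ℂ) :
    ∃ V M : Matrix (Fin n) (Fin n) ℂ,
      V ∈ Matrix.unitaryGroup (Fin n) ℂ ∧
      M ∈ Matrix.unitaryGroup (Fin n) ℂ ∧
      IsKLowerHessenberg k M ∧
      (∀ i j : Fin n, n - k ≤ (i : ℕ) ∨ n - k ≤ (j : ℕ) → V i j = if i = j then 1 else 0) ∧
      L * U = V * M := by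
  classical
  set m : ℕ := n - k with hm
  have hmk : m + k = n := by omega
  set A : Matrix (Fin n) (Fin n) ℂ := L * U with hA
  have hAu : A ∈ Matrix.unitaryGroup (Fin n) ℂ := mul_mem hL hU
  -- the index equivalence
  set e : Fin m ⊕ Fin k ≃ Fin n := finSumFinEquiv.trans (finCongr hmk) with he
  have he1 : ∀ a : Fin m, ((e (Sum.inl a)) : ℕ) = (a : ℕ) := by
    intro a; simp [he]
  have he2 : ∀ c : Fin k, ((e (Sum.inr c)) : ℕ) = m + (c : ℕ) := by
    intro c; simp [he]
  -- columns (reversed) of the relevant block of A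
  have hdim : Module.finrank ℂ (EuclideanSpace ℂ (Fin m)) = Fintype.card (Fin m) := by
    simp
  set f : Fin m → EuclideanSpace ℂ (Fin m) :=
    fun j₀ => (WithLp.toLp 2 (fun a => A (e (Sum.inl a)) ⟨((j₀.rev : ℕ)) + k, by
      have := j₀.rev.isLt; omega⟩) : EuclideanSpace ℂ (Fin m)) with hf
  haveI iwf : WellFoundedLT (Fin m) := inferInstance
  set b : OrthonormalBasis (Fin m) ℂ (EuclideanSpace ℂ (Fin m)) :=
    @InnerProductSpace.gramSchmidtOrthonormalBasis ℂ (EuclideanSpace ℂ (Fin m)) _ _ _ (Fin m) _ _ iwf _ _ hdim f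
    with hb
  -- the inner-product facts we need, as explicit sums
  have hinner : ∀ x y : EuclideanSpace ℂ (Fin m),
      (inner ℂ x y : ℂ) = ∑ a : Fin m, (starRingEnd ℂ) (x a) * y a := by
    intro x y
    rw [PiLp.inner_apply]
    exact Finset.sum_congr rfl (fun a _ => by rw [RCLike.inner_apply]; ring)
  have hortho : ∀ x y : Fin m,
      (∑ a : Fin m, (starRingEnd ℂ) (b x a) * b y a) = if x = y then 1 else 0 := by
    intro x y
    rw [← hinner]
    exact orthonormal_iff_ite.mp b.orthonormal x y
  -- the small unitary block
  set Vh : Matrix (Fin m) (Fin m) ℂ := fun l i => b i.rev l with hVh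
  have hVhu : Vhᴴ * Vh = 1 := by
    ext x y
    have hxy : (Vhᴴ * Vh) x y = ∑ a : Fin m, (starRingEnd ℂ) (b x.rev a) * b y.rev a := by
      rw [Matrix.mul_apply]; rfl
    rw [hxy, hortho]
    simp [Matrix.one_apply, Fin.rev_inj]
  set V : Matrix (Fin n) (Fin n) ℂ :=
    (Matrix.fromBlocks Vh 0 0 (1 : Matrix (Fin k) (Fin k) ℂ)).submatrix e.symm e.symm with hV
  have hVu : V ∈ Matrix.unitaryGroup (Fin n) ℂ := by
    rw [Matrix.mem_unitaryGroup_iff']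
    show Vᴴ * V = 1
    rw [hV, Matrix.conjTranspose_submatrix, Matrix.submatrix_mul_equiv,
      Matrix.fromBlocks_conjTranspose, Matrix.fromBlocks_multiply]
    simp [hVhu, Matrix.fromBlocks_one]
  set M : Matrix (Fin n) (Fin n) ℂ := Vᴴ * A with hM
  have hMu : M ∈ Matrix.unitaryGroup (Fin n) ℂ := by
    rw [hM, ← Matrix.star_eq_conjTranspose]
    exact mul_mem (Unitary.star_mem hVu) hAu
  refine ⟨V, M, hVu, hMu, ?_, ?_, ?_⟩
  · -- M is k-lower Hessenberg
    intro i j hij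
    have hjn : (j : ℕ) < n := j.isLt
    have him : (i : ℕ) < m := by omega
    have hjm : (j : ℕ) - k < m := by omega
    set i' : Fin m := ⟨i, him⟩ with hi'def
    set j' : Fin m := ⟨(j : ℕ) - k, hjm⟩ with hj'def
    have hi' : e.symm i = Sum.inl i' := by
      rw [Equiv.symm_apply_eq]
      exact Fin.ext (he1 i')
    rw [hM, Matrix.mul_apply, ← Equiv.sum_comp e, Fintype.sum_sum_type]
    have hterm2 : ∀ c : Fin k, Vᴴ i (e (Sum.inr c)) * A (e (Sum.inr c)) j = 0 := by
      intro c
      have : V (e (Sum.inr c)) i = 0 := by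
        rw [hV, Matrix.submatrix_apply, Equiv.symm_apply_apply, hi']
        rfl
      rw [Matrix.conjTranspose_apply, this, star_zero, zero_mul]
    rw [Finset.sum_congr rfl (fun c _ => hterm2 c), Finset.sum_const_zero, add_zero]
    have hterm1 : ∀ a : Fin m,
        Vᴴ i (e (Sum.inl a)) * A (e (Sum.inl a)) j
          = (starRingEnd ℂ) (b i'.rev a) * f j'.rev a := by
      intro a
      have h1 : V (e (Sum.inl a)) i = b i'.rev a := by
        rw [hV, Matrix.submatrix_apply, Equiv.symm_apply_apply, hi']
        rfl
      have h2 : f j'.rev a = A (e (Sum.inl a)) j := by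
        show A (e (Sum.inl a)) ⟨((j'.rev.rev : Fin m) : ℕ) + k, by
          have := (j'.rev.rev).isLt; omega⟩ = A (e (Sum.inl a)) j
        congr 1
        apply Fin.ext
        simp only [Fin.rev_rev]
        show ((j : ℕ) - k) + k = (j : ℕ)
        omega
      rw [Matrix.conjTranspose_apply, h1, h2]
      rfl
    rw [Finset.sum_congr rfl (fun a _ => hterm1 a), ← hinner]
    apply InnerProductSpace.gramSchmidtOrthonormalBasis_inv_triangular
    rw [Fin.rev_lt_rev]
    show (i : ℕ) < (j : ℕ) - k
    omega
  · -- V is identity outside the top-left block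
    intro i j hij
    obtain ⟨x, rfl⟩ := e.surjective i
    obtain ⟨y, rfl⟩ := e.surjective j
    rw [hV, Matrix.submatrix_apply, Equiv.symm_apply_apply, Equiv.symm_apply_apply]
    rcases x with a | c <;> rcases y with a' | c'
    · exfalso
      have := he1 a
      have := he1 a'
      have := a.isLt
      have := a'.isLt
      omega
    · have hne : e (Sum.inl a) ≠ e (Sum.inr c') := by
        intro h
        exact absurd (e.injective h) (by simp)
      simp [Matrix.fromBlocks, hne]
    · have hne : e (Sum.inr c) ≠ e (Sum.inl a') := by
        intro h
        exact absurd (e.injective h) (by simp)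
      simp [Matrix.fromBlocks, hne]
    · have hiff : e (Sum.inr c) = e (Sum.inr c') ↔ c = c' := by
        constructor
        · intro h
          exact Sum.inr.inj (e.injective h)
        · rintro rfl; rfl
      simp only [Matrix.fromBlocks_apply₂₂, Matrix.one_apply]
      exact if_congr hiff.symm rfl rfl
  · -- L * U = V * M
    rw [hM, ← Matrix.mul_assoc]
    have : V * Vᴴ = 1 := by
      rw [← Matrix.star_eq_conjTranspose]
      exact (Matrix.mem_unitaryGroup_iff.mp hVu)
    rw [this, Matrix.one_mul, hA]
end

section
/- Let A ∈ ℂ^{n×n} and let T ∈ ℂ^{n×n} be a nonsingular upper triangular matrix. Then the staircase sequences of AT and of A coincide: m_j(AT) = m_j(A) for every 1 ≤ j ≤ n. -/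
open Matrix

/-- The entry `A_{ij}` of a matrix in 1-based indexing (zero outside the index range). -/
def entry1 {n : ℕ} (A : Matrix (Fin n) (Fin n) ℂ) (i j : ℕ) : ℂ :=
  if h : 1 ≤ i ∧ i ≤ n ∧ 1 ≤ j ∧ j ≤ n then A ⟨i - 1, by omega⟩ ⟨j - 1, by omega⟩ else 0

open Classical in
/-- The (lower) staircase sequence `m_j(A)` of a matrix, with `m_0(A) = 0` and
`m_j(A) = max (m_{j-1}(A)) (max {i : i > j and A_{ij} ≠ 0})` (1-based indices). -/
noncomputable def staircase {n : ℕ} (A : Matrix (Fin n) (Fin n) ℂ) : ℕ → ℕ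
  | 0 => 0
  | j + 1 =>
    max (staircase A j)
      ((Finset.range (n + 1)).sup fun i =>
        if j + 1 < i ∧ entry1 A i (j + 1) ≠ 0 then i else 0)

lemma entry1_ne_zero_bounds {n : ℕ} {A : Matrix (Fin n) (Fin n) ℂ} {i j : ℕ}
    (h : entry1 A i j ≠ 0) : 1 ≤ i ∧ i ≤ n ∧ 1 ≤ j ∧ j ≤ n := by
  by_contra hc
  simp [entry1, hc] at h

lemma staircase_mono {n : ℕ} (A : Matrix (Fin n) (Fin n) ℂ) :
    ∀ {j j' : ℕ}, j ≤ j' → staircase A j ≤ staircase A j' := by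
  intro j j' h
  induction j' with
  | zero => simp [Nat.le_zero.mp h]
  | succ k ih =>
    rcases Nat.lt_or_ge j (k+1) with h' | h'
    · exact le_trans (ih (by omega)) (le_max_left _ _)
    · have : j = k + 1 := by omega
      simp [this]

lemma staircase_vanish {n : ℕ} (A : Matrix (Fin n) (Fin n) ℂ) {j i k : ℕ}
    (hk1 : 1 ≤ k) (hkj : k ≤ j) (hki : k < i) (hi : staircase A j < i) :
    entry1 A i k = 0 := by
  by_contra h
  obtain ⟨_, hin, _, _⟩ := entry1_ne_zero_bounds h
  obtain ⟨k', rfl⟩ : ∃ k', k = k' + 1 := ⟨k - 1, by omega⟩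
  have : i ≤ staircase A (k' + 1) := by
    refine le_trans ?_ (le_max_right _ _)
    have hm : i ∈ Finset.range (n + 1) := Finset.mem_range.mpr (by omega)
    calc i = if k' + 1 < i ∧ entry1 A i (k' + 1) ≠ 0 then i else 0 := by
              rw [if_pos ⟨hki, h⟩]
      _ ≤ _ := Finset.le_sup (f := fun i =>
              if k' + 1 < i ∧ entry1 A i (k' + 1) ≠ 0 then i else 0) hm
  have := staircase_mono A hkj
  omega

lemma staircase_mul_le {n : ℕ} (A B : Matrix (Fin n) (Fin n) ℂ)
    (hB : ∀ i j : Fin n, (j : ℕ) < (i : ℕ) → B i j = 0) :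
    ∀ j : ℕ, staircase (A * B) j ≤ staircase A j := by
  intro j
  induction j with
  | zero => simp [staircase]
  | succ k ih =>
    show max _ _ ≤ _
    rw [max_le_iff]
    constructor
    · exact le_trans ih (staircase_mono A (Nat.le_succ k))
    · apply Finset.sup_le
      intro i _
      split_ifs with h
      · rcases h with ⟨hki, hne⟩
        by_contra hgt
        push_neg at hgt
        apply hne
        obtain ⟨hi1, hin, hk1, hkn⟩ := entry1_ne_zero_bounds hne
        have hiS : staircase A (k + 1) < i := hgt
        -- show entry1 (A*B) i (k+1) = 0
        rw [entry1, dif_pos ⟨hi1, hin, hk1, hkn⟩]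
        rw [Matrix.mul_apply]
        apply Finset.sum_eq_zero
        intro l _
        rcases Nat.lt_or_ge (k + 1 - 1) (l : ℕ) with hl | hl
        · rw [hB l ⟨k + 1 - 1, by omega⟩ hl, mul_zero]
        · have hA : entry1 A i ((l : ℕ) + 1) = 0 :=
            staircase_vanish A (by omega) (by omega) (by omega) hiS
          rw [entry1, dif_pos ⟨hi1, hin, by omega, by omega⟩] at hA
          have hl' : (⟨(l : ℕ) + 1 - 1, by omega⟩ : Fin n) = l := by ext; simp
          rw [hl'] at hA
          rw [hA, zero_mul]
      · exact Nat.zero_le _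

/-- Multiplying on the right by a nonsingular upper triangular matrix preserves the
staircase profile. -/
theorem staircase_triangular_mul_right {n : ℕ} (A T : Matrix (Fin n) (Fin n) ℂ)
    (hTtri : ∀ i j : Fin n, (j : ℕ) < (i : ℕ) → T i j = 0)
    (hTinv : IsUnit T.det) :
    ∀ j : ℕ, 1 ≤ j → j ≤ n → staircase (A * T) j = staircase A j := by
  intro j _ _
  refine le_antisymm (staircase_mul_le A T hTtri j) ?_
  have hTinv' : ∀ i j : Fin n, (j : ℕ) < (i : ℕ) → T⁻¹ i j = 0 := by
    haveI := hTinv.invertible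
    haveI : Invertible T := Matrix.invertibleOfIsUnitDet T hTinv
    exact Matrix.blockTriangular_inv_of_blockTriangular
      (b := fun i : Fin n => (i : ℕ)) hTtri
  have hA : A = A * T * T⁻¹ := by
    rw [Matrix.mul_assoc, Matrix.mul_nonsing_inv _ hTinv, Matrix.mul_one]
  conv_lhs => rw [hA]
  exact staircase_mul_le (A * T) T⁻¹ hTinv' j
end

section
/- Every unitary matrix U ∈ ℂ^{n×n} can be factorized as U = R_{n−1} R_{n−2} ⋯ R_1 D, where each R_i ∈ ℂ^{n×n} is a unitary upper Hessenberg matrix (1-upper Hessenberg) and D ∈ ℂ^{n×n} is a diagonal unitary (phase) matrix. -/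
open Matrix

/-- A matrix is upper Hessenberg if its entries vanish below the first subdiagonal. -/
def IsUpperHessenberg {m : ℕ} (R : Matrix (Fin m) (Fin m) ℂ) : Prop :=
  ∀ i j : Fin m, (j : ℕ) + 1 < (i : ℕ) → R i j = 0

namespace HessAux

/-- Extend a matrix by a leading `1` block: `1 ⊕ V`. -/
def ext1 {m : ℕ} (V : Matrix (Fin m) (Fin m) ℂ) : Matrix (Fin (m+1)) (Fin (m+1)) ℂ :=
  Matrix.of fun i j =>
    Fin.cases (Fin.cases (1:ℂ) (fun _ => 0) j) (fun i' => Fin.cases (0:ℂ) (fun j' => V i' j') j) i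

variable {m : ℕ}

@[simp] lemma ext1_zero_zero (V : Matrix (Fin m) (Fin m) ℂ) : ext1 V 0 0 = 1 := by
  simp [ext1]

@[simp] lemma ext1_zero_succ (V : Matrix (Fin m) (Fin m) ℂ) (j : Fin m) :
    ext1 V 0 j.succ = 0 := by simp [ext1]

@[simp] lemma ext1_succ_zero (V : Matrix (Fin m) (Fin m) ℂ) (i : Fin m) :
    ext1 V i.succ 0 = 0 := by simp [ext1]

@[simp] lemma ext1_succ_succ (V : Matrix (Fin m) (Fin m) ℂ) (i j : Fin m) :
    ext1 V i.succ j.succ = V i j := by simp [ext1]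

lemma ext1_mul (V W : Matrix (Fin m) (Fin m) ℂ) : ext1 V * ext1 W = ext1 (V * W) := by
  ext i j
  induction i using Fin.cases with
  | zero =>
    induction j using Fin.cases with
    | zero => simp [Matrix.mul_apply, Fin.sum_univ_succ]
    | succ j => simp [Matrix.mul_apply, Fin.sum_univ_succ]
  | succ i =>
    induction j using Fin.cases with
    | zero => simp [Matrix.mul_apply, Fin.sum_univ_succ]
    | succ j => simp [Matrix.mul_apply, Fin.sum_univ_succ]

lemma ext1_one : ext1 (1 : Matrix (Fin m) (Fin m) ℂ) = 1 := by
  ext i j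
  induction i using Fin.cases with
  | zero =>
    induction j using Fin.cases with
    | zero => simp
    | succ j => simp [Matrix.one_apply, (Fin.succ_ne_zero j).symm]
  | succ i =>
    induction j using Fin.cases with
    | zero => simp [Matrix.one_apply, Fin.succ_ne_zero i]
    | succ j => simp [Matrix.one_apply, Fin.succ_inj]

lemma ext1_conjTranspose (V : Matrix (Fin m) (Fin m) ℂ) : (ext1 V)ᴴ = ext1 Vᴴ := by
  ext i j
  induction i using Fin.cases with
  | zero =>
    induction j using Fin.cases with
    | zero => simp
    | succ j => simp
  | succ i =>
    induction j using Fin.cases with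
    | zero => simp
    | succ j => simp

lemma ext1_mem {V : Matrix (Fin m) (Fin m) ℂ} (hV : V ∈ Matrix.unitaryGroup (Fin m) ℂ) :
    ext1 V ∈ Matrix.unitaryGroup (Fin (m+1)) ℂ := by
  rw [Matrix.mem_unitaryGroup_iff] at hV ⊢
  rw [Matrix.star_eq_conjTranspose, ext1_conjTranspose, ext1_mul, ← Matrix.star_eq_conjTranspose,
    hV, ext1_one]

lemma ext1_hess {V : Matrix (Fin m) (Fin m) ℂ} (hV : IsUpperHessenberg V) :
    IsUpperHessenberg (ext1 V) := by
  intro i j hij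
  induction i using Fin.cases with
  | zero => simp at hij
  | succ i =>
    induction j using Fin.cases with
    | zero => simp
    | succ j =>
      rw [ext1_succ_succ]
      apply hV
      simp only [Fin.val_succ] at hij
      omega

lemma ext1_diagonal (d : Fin m → ℂ) :
    ext1 (Matrix.diagonal d) = Matrix.diagonal (Fin.cons 1 d) := by
  ext i j
  induction i using Fin.cases with
  | zero =>
    induction j using Fin.cases with
    | zero => simp
    | succ j => simp [Matrix.diagonal_apply, (Fin.succ_ne_zero j).symm]
  | succ i =>
    induction j using Fin.cases with
    | zero => simp [Matrix.diagonal_apply, Fin.succ_ne_zero i]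
    | succ j =>
      rcases eq_or_ne i j with rfl | h
      · simp
      · simp [Matrix.diagonal_apply, h, fun hh => h (Fin.succ_inj.mp hh)]


local notation "⟪" x ", " y "⟫" => @inner ℂ _ _ x y

/-- Key step: a unitary `U` of size `m+1` factors as `(1 ⊕ V) * R` with `R` unitary
upper Hessenberg and `V` unitary of size `m`. -/
lemma key (U : Matrix (Fin (m+1)) (Fin (m+1)) ℂ)
    (hU : U ∈ Matrix.unitaryGroup (Fin (m+1)) ℂ) :
    ∃ (V : Matrix (Fin m) (Fin m) ℂ) (R : Matrix (Fin (m+1)) (Fin (m+1)) ℂ),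
      V ∈ Matrix.unitaryGroup (Fin m) ℂ ∧ R ∈ Matrix.unitaryGroup (Fin (m+1)) ℂ ∧
      IsUpperHessenberg R ∧ U = ext1 V * R := by
  classical
  obtain ⟨W, hW, hWtri⟩ :
      ∃ (W : Matrix (Fin m) (Fin m) ℂ), W ∈ Matrix.unitaryGroup (Fin m) ℂ ∧
        ∀ (i' : Fin m) (j : Fin (m+1)), (j : ℕ) < (i' : ℕ) →
          ∑ k : Fin m, W i' k * U k.succ j = 0 := by
    set f : Fin m → EuclideanSpace ℂ (Fin m) :=
      fun s => WithLp.toLp 2 (fun k : Fin m => U k.succ s.castSucc) with hf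
    have hcard : Module.finrank ℂ (EuclideanSpace ℂ (Fin m)) = Fintype.card (Fin m) := by
      simp
    haveI : WellFoundedLT (Fin m) := inferInstance
    set u : OrthonormalBasis (Fin m) ℂ (EuclideanSpace ℂ (Fin m)) :=
      InnerProductSpace.gramSchmidtOrthonormalBasis hcard f with hu
    refine ⟨Matrix.of fun t k => (starRingEnd ℂ) (u t k), ?_, ?_⟩
    · rw [Matrix.mem_unitaryGroup_iff]
      ext t t'
      have horth := orthonormal_iff_ite.mp u.orthonormal t t'
      rw [PiLp.inner_apply] at horth
      simp only [RCLike.inner_apply] at horth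
      simp only [Matrix.mul_apply, Matrix.star_eq_conjTranspose, Matrix.conjTranspose_apply,
        Matrix.of_apply, RingHomCompTriple.comp_apply, RingHom.id_apply,
        Complex.conj_conj, Matrix.one_apply]
      simpa [mul_comm] using horth
    · intro i' j hj
      have hjm : (j : ℕ) < m := lt_trans hj i'.isLt
      set j₀ : Fin m := ⟨j, hjm⟩ with hj₀
      have hjc : j₀.castSucc = j := by ext; simp [hj₀]
      have htri := InnerProductSpace.gramSchmidtOrthonormalBasis_inv_triangular hcard f
        (show j₀ < i' from hj)
      rw [PiLp.inner_apply] at htri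
      simp only [RCLike.inner_apply, hf] at htri
      rw [← hjc]
      simpa [mul_comm, hu, hf] using htri
  refine ⟨Wᴴ, ext1 W * U, ?_, ?_, ?_, ?_⟩
  · exact (Matrix.mem_unitaryGroup_iff.mpr (by
      rw [Matrix.star_eq_conjTranspose, Matrix.conjTranspose_conjTranspose]
      exact Matrix.mem_unitaryGroup_iff'.mp hW))
  · exact Submonoid.mul_mem _ (ext1_mem hW) hU
  · intro i j hij
    induction i using Fin.cases with
    | zero => simp at hij
    | succ i =>
      rw [Matrix.mul_apply, Fin.sum_univ_succ]
      simp only [ext1_succ_zero, ext1_succ_succ, zero_mul, zero_add]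
      exact hWtri i j (by simp only [Fin.val_succ] at hij; omega)
  · have hWW : Wᴴ * W = 1 := by
      have := Matrix.mem_unitaryGroup_iff'.mp hW
      rwa [Matrix.star_eq_conjTranspose] at this
    rw [← Matrix.mul_assoc, ext1_mul, hWW, ext1_one, Matrix.one_mul]

lemma diag_unitary {k : ℕ} {d : Fin k → ℂ} (hd : ∀ i, ‖d i‖ = 1) :
    Matrix.diagonal d ∈ Matrix.unitaryGroup (Fin k) ℂ := by
  rw [Matrix.mem_unitaryGroup_iff, Matrix.star_eq_conjTranspose, Matrix.diagonal_conjTranspose,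
    Matrix.diagonal_mul_diagonal]
  have h1 : (fun i => d i * star d i) = fun _ : Fin k => (1 : ℂ) := by
    funext i
    rw [Pi.star_apply, show star (d i) = (starRingEnd ℂ) (d i) from rfl, Complex.mul_conj]
    norm_cast
    rw [Complex.normSq_eq_norm_sq, hd i, one_pow]
  rw [h1]
  exact Matrix.diagonal_one

/-- Multiplicative hom version of `ext1`. -/
def ext1Hom : Matrix (Fin m) (Fin m) ℂ →* Matrix (Fin (m+1)) (Fin (m+1)) ℂ where
  toFun := ext1
  map_one' := ext1_one
  map_mul' := fun A B => (ext1_mul A B).symm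

theorem main : ∀ (n : ℕ) (U : Matrix (Fin n) (Fin n) ℂ),
    U ∈ Matrix.unitaryGroup (Fin n) ℂ →
    ∃ (R : Fin (n - 1) → Matrix (Fin n) (Fin n) ℂ) (d : Fin n → ℂ),
      (∀ i, R i ∈ Matrix.unitaryGroup (Fin n) ℂ ∧ IsUpperHessenberg (R i)) ∧
      (∀ i, ‖d i‖ = 1) ∧
      U = (List.ofFn R).prod * Matrix.diagonal d := by
  intro n
  induction n with
  | zero =>
    intro U hU
    exact ⟨fun i => i.elim0, fun i => i.elim0, fun i => i.elim0, fun i => i.elim0,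
      Subsingleton.elim _ _⟩
  | succ m ih =>
    intro U hU
    cases m with
    | zero =>
      refine ⟨fun i => i.elim0, fun _ => U 0 0, fun i => i.elim0, ?_, ?_⟩
      · intro i
        have h := Matrix.mem_unitaryGroup_iff'.mp hU
        have h00 := congrFun (congrFun h 0) 0
        rw [Matrix.mul_apply] at h00
        simp only [Fin.sum_univ_succ, Fin.sum_univ_zero, add_zero,
          Matrix.star_eq_conjTranspose, Matrix.conjTranspose_apply,
          Matrix.one_apply_eq] at h00
        have hsq : Complex.normSq (U 0 0) = 1 := by
          rw [show star (U 0 0) = (starRingEnd ℂ) (U 0 0) from rfl, mul_comm,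
            Complex.mul_conj] at h00
          exact_mod_cast h00
        have habs : ‖U 0 0‖ ^ 2 = 1 := by
          rw [Complex.sq_norm, hsq]
        nlinarith [norm_nonneg (U 0 0), habs]
      · ext i j
        fin_cases i <;> fin_cases j <;>
          simp [List.ofFn_zero, Matrix.diagonal_apply]
    | succ k =>
      obtain ⟨V, R₀, hV, hR₀u, hR₀h, hUe⟩ := key U hU
      obtain ⟨S, d', hS, hd', hVe⟩ := ih V hV
      set Rlast : Matrix (Fin (k+2)) (Fin (k+2)) ℂ := ext1 (Matrix.diagonal d') * R₀ with hRl
      set R : Fin (k+1) → Matrix (Fin (k+2)) (Fin (k+2)) ℂ :=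
        Fin.snoc (fun i => ext1 (S i)) Rlast with hR
      refine ⟨R, fun _ => 1, ?_, fun i => by simp, ?_⟩
      · intro i
        induction i using Fin.lastCases with
        | last =>
          rw [hR]
          simp only [Fin.snoc_last]
          constructor
          · exact Submonoid.mul_mem _ (ext1_mem (diag_unitary hd')) hR₀u
          · intro i j hij
            rw [hRl, ext1_diagonal, Matrix.diagonal_mul, hR₀h i j hij, mul_zero]
        | cast i =>
          rw [hR]
          simp only [Fin.snoc_castSucc]
          exact ⟨ext1_mem (hS i).1, ext1_hess (hS i).2⟩
      · have hprod : (List.ofFn R).prod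
            = (List.ofFn fun i => ext1 (S i)).prod * Rlast := by
          have h1 : (fun i : Fin k =>
              (Fin.snoc (fun i => ext1 (S i)) Rlast : Fin (k+1) → _) i.castSucc)
              = fun i : Fin k => ext1 (S i) := funext fun i => Fin.snoc_castSucc _ _ _
          rw [hR, List.ofFn_succ', List.prod_concat, Fin.snoc_last, h1]
          rfl
        have hmap : (List.ofFn fun i => ext1 (S i)).prod = ext1 (List.ofFn S).prod := by
          have := (ext1Hom (m := k+1)).map_list_prod (List.ofFn S)
          rw [List.map_ofFn] at this
          exact this.symm
        rw [hprod, hmap, hUe, hVe, ← ext1_mul]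
        rw [show Matrix.diagonal (fun _ : Fin (k+2) => (1:ℂ)) = 1 from Matrix.diagonal_one]
        rw [Matrix.mul_one, Matrix.mul_assoc, hRl]

end HessAux

/-- Every unitary matrix `U ∈ ℂ^{n×n}` factors as a product of `n - 1` unitary upper
Hessenberg matrices times a diagonal unitary (phase) matrix:
`U = R_{n-1} R_{n-2} ⋯ R_1 D`. -/
theorem unitary_eq_prod_upperHessenberg_mul_phase {n : ℕ}
    (U : Matrix (Fin n) (Fin n) ℂ) (hU : U ∈ Matrix.unitaryGroup (Fin n) ℂ) :
    ∃ (R : Fin (n - 1) → Matrix (Fin n) (Fin n) ℂ) (d : Fin n → ℂ),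
      (∀ i, R i ∈ Matrix.unitaryGroup (Fin n) ℂ ∧ IsUpperHessenberg (R i)) ∧
      (∀ i, ‖d i‖ = 1) ∧
      U = (List.ofFn R).prod * Matrix.diagonal d :=
  HessAux.main n U hU
end

section
/- Let A = V + XY* ∈ ℂ^{n×n} with V ∈ ℂ^{n×n} unitary and X, Y ∈ ℂ^{n×k} with Y*Y = I_k (Y has orthonormal columns). Set B = VY and define the (n+k)×(n+k) matrices V̂ = [[V − V Y Y*, B],[Y*, 0_{k×k}]], X̂ = [X + B; −I_k] ∈ ℂ^{(n+k)×k}, and Ŷ = [Y; 0_{k×k}] ∈ ℂ^{(n+k)×k}. Then V̂ is unitary and Â := V̂ + X̂ Ŷ* = [[A, B],[0_{k×n}, 0_{k×k}]]; in particular the last k rows of Â are zero and its leading n×n principal submatrix is A. -/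
open Matrix

set_option maxHeartbeats 2000000 in
/-- **Embedding of a unitary-plus-rank-k matrix.** If `A = V + XY*` with `V` unitary and
`Y*Y = I_k`, setting `B = VY`, `V̂ = [[V - VYY*, B],[Y*, 0]]`, `X̂ = [X + B; -I_k]` and
`Ŷ = [Y; 0]`, the matrix `V̂` is unitary and `V̂ + X̂ Ŷ* = [[A, B],[0, 0]]`, i.e. the
bordered matrix `Â` has last `k` rows zero and leading `n×n` principal submatrix `A`. -/
theorem embedding_unitary_plus_rank_k {n k : ℕ}
    (A V : Matrix (Fin n) (Fin n) ℂ) (X Y : Matrix (Fin n) (Fin k) ℂ)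
    (hV : V ∈ Matrix.unitaryGroup (Fin n) ℂ)
    (hY : Yᴴ * Y = 1)
    (hA : A = V + X * Yᴴ) :
    Matrix.fromBlocks (V - V * Y * Yᴴ) (V * Y) Yᴴ (0 : Matrix (Fin k) (Fin k) ℂ) ∈
        Matrix.unitaryGroup (Fin n ⊕ Fin k) ℂ ∧
      Matrix.fromBlocks (V - V * Y * Yᴴ) (V * Y) Yᴴ (0 : Matrix (Fin k) (Fin k) ℂ) +
          Matrix.fromRows (X + V * Y) (-1 : Matrix (Fin k) (Fin k) ℂ) *
            (Matrix.fromRows Y (0 : Matrix (Fin k) (Fin k) ℂ))ᴴ =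
        Matrix.fromBlocks A (V * Y) (0 : Matrix (Fin k) (Fin n) ℂ)
          (0 : Matrix (Fin k) (Fin k) ℂ) := by
  have hVV : Vᴴ * V = 1 := by
    have := mem_unitaryGroup_iff'.mp hV
    simpa [star_eq_conjTranspose] using this
  have hYY : Y * Yᴴ * (Y * Yᴴ) = Y * Yᴴ := by
    rw [Matrix.mul_assoc, ← Matrix.mul_assoc Yᴴ, hY, Matrix.one_mul]
  constructor
  · rw [mem_unitaryGroup_iff', star_eq_conjTranspose, fromBlocks_conjTranspose,
      fromBlocks_multiply]
    simp only [conjTranspose_zero, conjTranspose_conjTranspose, Matrix.mul_zero,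
      Matrix.zero_mul, add_zero]
    have e1 : (V - V * Y * Yᴴ)ᴴ * (V - V * Y * Yᴴ) + Y * Yᴴ = 1 := by
      have h : (V - V * Y * Yᴴ)ᴴ * (V - V * Y * Yᴴ)
          = Vᴴ * V - Y * Yᴴ * (Vᴴ * V) - Vᴴ * V * (Y * Yᴴ) + Y * Yᴴ * (Vᴴ * V) * (Y * Yᴴ) := by
        simp only [conjTranspose_sub, conjTranspose_mul, conjTranspose_conjTranspose]
        noncomm_ring
        simp only [Matrix.add_mul, Matrix.mul_add, smul_mul_assoc, mul_smul_comm, Matrix.smul_mul, Matrix.mul_smul, Matrix.mul_assoc]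
      rw [h, hVV]
      simp only [Matrix.one_mul, Matrix.mul_one, hYY]
      abel
    have e2 : (V - V * Y * Yᴴ)ᴴ * (V * Y) = 0 := by
      have h : (V - V * Y * Yᴴ)ᴴ * (V * Y)
          = Vᴴ * V * Y - Y * Yᴴ * (Vᴴ * V) * Y := by
        simp only [conjTranspose_sub, conjTranspose_mul, conjTranspose_conjTranspose]
        noncomm_ring
        simp only [Matrix.add_mul, Matrix.mul_add, smul_mul_assoc, mul_smul_comm, Matrix.smul_mul, Matrix.mul_smul, Matrix.mul_assoc]
      rw [h, hVV, Matrix.one_mul, Matrix.mul_one, Matrix.mul_assoc, hY, Matrix.mul_one,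
        sub_self]
    have e3 : (V * Y)ᴴ * (V - V * Y * Yᴴ) = 0 := by
      have h : (V * Y)ᴴ * (V - V * Y * Yᴴ)
          = Yᴴ * (Vᴴ * V) - Yᴴ * (Vᴴ * V) * Y * Yᴴ := by
        simp only [conjTranspose_mul]
        noncomm_ring
        simp only [Matrix.add_mul, Matrix.mul_add, smul_mul_assoc, mul_smul_comm, Matrix.smul_mul, Matrix.mul_smul, Matrix.mul_assoc]
      rw [h, hVV, Matrix.mul_one, hY, Matrix.one_mul, sub_self]
    have e4 : (V * Y)ᴴ * (V * Y) = (1 : Matrix (Fin k) (Fin k) ℂ) := by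
      have h : (V * Y)ᴴ * (V * Y) = Yᴴ * (Vᴴ * V) * Y := by
        simp only [conjTranspose_mul]
        simp only [conjTranspose_mul, Matrix.mul_assoc]
      rw [h, hVV, Matrix.mul_one, hY]
    rw [e1, e2, e3, e4, fromBlocks_one]
  · have b1 : V - V * Y * Yᴴ + (X + V * Y) * Yᴴ = A := by
      rw [hA]
      simp only [Matrix.add_mul, Matrix.mul_assoc, sub_add_eq_add_sub]
      abel
    have b3 : Yᴴ + (-1 : Matrix (Fin k) (Fin k) ℂ) * Yᴴ = 0 := by
      simp
    rw [conjTranspose_fromRows_eq_fromCols_conjTranspose, fromRows_mul_fromCols,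
      conjTranspose_zero, Matrix.mul_zero, Matrix.mul_zero, fromBlocks_add, b1, b3,
      add_zero, add_zero]
end

section
/- Let V ∈ ℂ^{n×n} be unitary, let Y ∈ ℂ^{n×k} with Y*Y = I_k, and let S ∈ ℂ^{(n+k)×(n+k)} be a unitary matrix satisfying S* [Y; −I_k] = [√2 I_k; 0]. Then diag(V, I_k) · S · diag(−I_k, I_n) · S* = [[V − V Y Y*, V Y],[Y*, 0_{k×k}]]. -/
open Matrix

private lemma delta_sum (k : ℕ) (a b : ℕ) :
    (∑ j : Fin k, (if a = (j : ℕ) then (1 : ℂ) else 0) * (if b = (j : ℕ) then (1 : ℂ) else 0))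
      = if a = b ∧ a < k then 1 else 0 := by
  rcases eq_or_ne a b with rfl | hab
  · have h1 : ∀ j : Fin k, (if a = (j : ℕ) then (1 : ℂ) else 0) * (if a = (j : ℕ) then (1 : ℂ) else 0)
        = if a = (j : ℕ) then (1 : ℂ) else 0 := by
      intro j; by_cases h : a = (j : ℕ) <;> simp [h]
    rw [Finset.sum_congr rfl fun j _ => h1 j]
    rw [Fin.sum_univ_eq_sum_range (fun j => if a = j then (1 : ℂ) else 0) k]
    rw [Finset.sum_ite_eq]
    simp
  · rw [if_neg (by tauto)]
    apply Finset.sum_eq_zero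
    intro j _
    by_cases h : a = (j : ℕ)
    · have hb : b ≠ (j : ℕ) := by omega
      simp [h, hb]
    · simp [h]

/-- If `V` is unitary, `Y*Y = I_k` and `S` is a unitary `(n+k)×(n+k)` matrix with
`S* [Y; -I_k] = [√2 I_k; 0]`, then
`diag(V, I_k) · S · diag(-I_k, I_n) · S* = [[V - VYY*, VY],[Y*, 0]]`. -/
theorem bordered_unitary_factorization {n k : ℕ}
    (V : Matrix (Fin n) (Fin n) ℂ) (Y : Matrix (Fin n) (Fin k) ℂ)
    (S : Matrix (Fin n ⊕ Fin k) (Fin n ⊕ Fin k) ℂ)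
    (hV : V ∈ Matrix.unitaryGroup (Fin n) ℂ)
    (hY : Yᴴ * Y = 1)
    (hS : S ∈ Matrix.unitaryGroup (Fin n ⊕ Fin k) ℂ)
    (hSY : Sᴴ * Matrix.fromRows Y (-1 : Matrix (Fin k) (Fin k) ℂ) =
      Matrix.of fun (i : Fin n ⊕ Fin k) (j : Fin k) =>
        Sum.elim (fun i' : Fin n => if (i' : ℕ) = (j : ℕ) then (Real.sqrt 2 : ℂ) else 0)
          (fun _ => 0) i) :
    Matrix.fromBlocks V 0 0 (1 : Matrix (Fin k) (Fin k) ℂ) * S *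
        Matrix.diagonal (Sum.elim (fun i : Fin n => if (i : ℕ) < k then (-1 : ℂ) else 1)
          (fun _ : Fin k => (1 : ℂ))) * Sᴴ =
      Matrix.fromBlocks (V - V * Y * Yᴴ) (V * Y) Yᴴ (0 : Matrix (Fin k) (Fin k) ℂ) := by
  classical
  set c : ℂ := (Real.sqrt 2 : ℂ) with hc
  have hc2 : c * c = 2 := by
    rw [hc]
    norm_cast
    exact Real.mul_self_sqrt (by norm_num)
  have hc0 : c ≠ 0 := by
    intro h; rw [h, zero_mul] at hc2; exact two_ne_zero hc2.symm
  set J : Matrix (Fin n ⊕ Fin k) (Fin k) ℂ :=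
    Matrix.fromRows (Matrix.of fun i j => if (i : ℕ) = (j : ℕ) then 1 else 0) 0 with hJ
  set B : Matrix (Fin n ⊕ Fin k) (Fin k) ℂ := Matrix.fromRows Y (-1) with hB
  -- rewrite the RHS of hSY as c • J
  have hE : (Matrix.of fun (i : Fin n ⊕ Fin k) (j : Fin k) =>
        Sum.elim (fun i' : Fin n => if (i' : ℕ) = (j : ℕ) then (Real.sqrt 2 : ℂ) else 0)
          (fun _ => 0) i) = c • J := by
    ext i j
    cases i with
    | inl i' => simp [hJ, hc, Matrix.fromRows_apply_inl, mul_ite]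
    | inr i' => simp [hJ, Matrix.fromRows_apply_inr]
  rw [hE] at hSY
  have hSS : S * Sᴴ = 1 := by
    have := Matrix.mem_unitaryGroup_iff.mp hS
    rwa [Matrix.star_eq_conjTranspose] at this
  have hSS' : Sᴴ * S = 1 := by
    have := Matrix.mem_unitaryGroup_iff'.mp hS
    rwa [Matrix.star_eq_conjTranspose] at this
  -- S * J = c⁻¹ • B
  have hSJ : S * J = c⁻¹ • B := by
    have h1 : B = c • (S * J) := by
      calc B = (S * Sᴴ) * B := by rw [hSS, Matrix.one_mul]
        _ = S * (Sᴴ * B) := by rw [Matrix.mul_assoc]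
        _ = S * (c • J) := by rw [hSY]
        _ = c • (S * J) := by rw [Matrix.mul_smul]
    rw [h1, smul_smul, inv_mul_cancel₀ hc0, one_smul]
  -- the diagonal matrix is 1 - 2 • (J * Jᴴ)
  have hD : Matrix.diagonal (Sum.elim (fun i : Fin n => if (i : ℕ) < k then (-1 : ℂ) else 1)
      (fun _ : Fin k => (1 : ℂ))) = 1 - (2 : ℂ) • (J * Jᴴ) := by
    ext a b
    have hJJ : (J * Jᴴ) a b =
        Sum.elim (fun i : Fin n => Sum.elim
          (fun i' : Fin n => if (i : ℕ) = (i' : ℕ) ∧ (i : ℕ) < k then (1 : ℂ) else 0)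
          (fun _ => 0) b) (fun _ => 0) a := by
      cases a with
      | inl i =>
        cases b with
        | inl i' =>
          simp only [Matrix.mul_apply, Matrix.conjTranspose_apply, hJ,
            Matrix.fromRows_apply_inl, Matrix.of_apply, Sum.elim_inl]
          rw [show (∑ j : Fin k, (if (i : ℕ) = (j : ℕ) then (1:ℂ) else 0) *
              star (if (i' : ℕ) = (j : ℕ) then (1:ℂ) else 0)) =
              ∑ j : Fin k, (if (i : ℕ) = (j : ℕ) then (1:ℂ) else 0) *
              (if (i' : ℕ) = (j : ℕ) then (1:ℂ) else 0) from
            Finset.sum_congr rfl fun j _ => by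
              by_cases h : (i' : ℕ) = (j : ℕ) <;> simp [h]]
          exact delta_sum k i i'
        | inr i' =>
          simp [Matrix.mul_apply, Matrix.conjTranspose_apply, hJ]
      | inr i =>
        simp [Matrix.mul_apply, Matrix.conjTranspose_apply, hJ]
    simp only [Matrix.sub_apply, Matrix.smul_apply, hJJ, Matrix.one_apply,
      Matrix.diagonal_apply]
    cases a with
    | inl i =>
      cases b with
      | inl i' =>
        rcases eq_or_ne i i' with rfl | hii
        · by_cases h : (i : ℕ) < k <;> simp [h] <;> ring
        · have : (i : ℕ) ≠ (i' : ℕ) := fun h => hii (Fin.ext h)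
          simp [hii, this, Sum.inl.injEq]
      | inr i' => simp
    | inr i =>
      cases b with
      | inl i' => simp
      | inr i' =>
        rcases eq_or_ne i i' with rfl | hii
        · simp
        · simp [hii, Sum.inr.injEq]
  rw [hD]
  have key : S * (1 - (2 : ℂ) • (J * Jᴴ)) * Sᴴ = 1 - B * Bᴴ := by
    have h2 : S * ((2 : ℂ) • (J * Jᴴ)) * Sᴴ = (2 : ℂ) • ((S * J) * (S * J)ᴴ) := by
      rw [Matrix.conjTranspose_mul]
      rw [Matrix.mul_smul, Matrix.smul_mul]
      rw [Matrix.mul_assoc, Matrix.mul_assoc, Matrix.mul_assoc]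
    rw [Matrix.mul_sub, Matrix.sub_mul, Matrix.mul_one, hSS, h2, hSJ]
    congr 1
    rw [Matrix.conjTranspose_smul, Matrix.smul_mul, Matrix.mul_smul, smul_smul, smul_smul]
    have hst : star c⁻¹ = c⁻¹ := by
      rw [star_inv₀]
      congr 1
      rw [hc]
      exact Complex.conj_ofReal _
    have hco : (2 : ℂ) * c⁻¹ * star c⁻¹ = 1 := by
      rw [hst, ← hc2]
      field_simp
    rw [mul_assoc] at hco ⊢
    rw [hco, one_smul]
  rw [Matrix.mul_assoc, Matrix.mul_assoc, ← Matrix.mul_assoc S, key]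
  have hBB : B * Bᴴ = Matrix.fromBlocks (Y * Yᴴ) (-Y) (-Yᴴ) 1 := by
    rw [hB, Matrix.conjTranspose_fromRows_eq_fromCols_conjTranspose,
      Matrix.fromRows_mul_fromCols]
    congr 1 <;> simp
  rw [hBB]
  have h1mB : (1 : Matrix (Fin n ⊕ Fin k) (Fin n ⊕ Fin k) ℂ) -
      Matrix.fromBlocks (Y * Yᴴ) (-Y) (-Yᴴ) 1 =
      Matrix.fromBlocks (1 - Y * Yᴴ) Y Yᴴ 0 := by
    ext a b
    cases a <;> cases b <;> simp [Matrix.one_apply]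
  rw [h1mB, Matrix.fromBlocks_multiply]
  simp [Matrix.mul_sub, Matrix.mul_assoc]
end

section
/- Let m = n + k. Let L ∈ ℂ^{m×m} be a proper unitary k-lower Hessenberg matrix and R ∈ ℂ^{m×m} a proper unitary k-upper Hessenberg matrix. Let U = diag(I_k, Û) with Û ∈ ℂ^{n×n} unitary, let Z ∈ ℂ^{m×k}, E = [I_k; 0] ∈ ℂ^{m×k}, and F = U + E Z*. Suppose the matrix Â = L F R has its last k rows equal to zero. Then A := Â(1:n, 1:n) is nonsingular and A has the same staircase profile as Û, i.e. m_j(A) = m_j(Û) for 1 ≤ j ≤ n. -/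
open Matrix

lemma staircase_le_iff {n : ℕ} (M : Matrix (Fin n) (Fin n) ℂ) (j r : ℕ) :
    staircase M j ≤ r ↔
      ∀ (j' i : ℕ), 1 ≤ j' → j' ≤ j → j' < i → r < i → entry1 M i j' = 0 := by
  induction j with
  | zero =>
    simp only [staircase]
    constructor
    · intro _ j' i h1 h2; omega
    · intro _; exact Nat.zero_le r
  | succ j ih =>
    simp only [staircase, max_le_iff, Finset.sup_le_iff, ih]
    constructor
    · rintro ⟨h1, h2⟩ j' i hj'1 hj'j hj'i hri
      rcases Nat.lt_or_ge j' (j + 1) with h | h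
      · exact h1 j' i hj'1 (by omega) hj'i hri
      · have hj' : j' = j + 1 := by omega
        subst hj'
        by_cases hin : i ≤ n
        · have := h2 i (Finset.mem_range.mpr (by omega))
          by_contra hne
          rw [if_pos ⟨hj'i, hne⟩] at this
          omega
        · unfold entry1; rw [dif_neg (by omega)]
    · intro h
      refine ⟨fun j' i h1 h2 h3 h4 => h j' i h1 (by omega) h3 h4, ?_⟩
      intro i _
      split_ifs with hc
      · by_contra hir
        exact hc.2 (h (j + 1) i (by omega) le_rfl hc.1 (by omega))
      · exact Nat.zero_le r

/-- `staircase M j ≤ r` as a zero-region condition in 0-based indices. -/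
lemma staircase_le_iff' {n : ℕ} (M : Matrix (Fin n) (Fin n) ℂ) (j r : ℕ) :
    staircase M j ≤ r ↔
      ∀ i l : Fin n, (l : ℕ) < j → (l : ℕ) < (i : ℕ) → r ≤ (i : ℕ) → M i l = 0 := by
  rw [staircase_le_iff]
  constructor
  · intro h i l hlj hli hri
    have := h ((l : ℕ) + 1) ((i : ℕ) + 1) (by omega) (by omega) (by omega) (by omega)
    unfold entry1 at this
    rw [dif_pos ⟨by omega, by omega, by omega, by omega⟩] at this
    simpa using this
  · intro h j' i hj'1 hj'j hj'i hri
    unfold entry1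
    split_ifs with hc
    · exact h ⟨i - 1, by omega⟩ ⟨j' - 1, by omega⟩ (by simp only [Fin.val_mk]; omega)
        (by simp only [Fin.val_mk]; omega) (by simp only [Fin.val_mk]; omega)
    · rfl

/-- Zero patterns on the staircase regions are preserved under multiplication by
upper triangular matrices on both sides. -/
lemma zr_mul {n : ℕ} {M P Q : Matrix (Fin n) (Fin n) ℂ}
    (hP : P.BlockTriangular id) (hQ : Q.BlockTriangular id) (j r : ℕ)
    (h : ∀ i l : Fin n, (l : ℕ) < j → (l : ℕ) < (i : ℕ) → r ≤ (i : ℕ) → M i l = 0) :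
    ∀ i l : Fin n, (l : ℕ) < j → (l : ℕ) < (i : ℕ) → r ≤ (i : ℕ) → (P * M * Q) i l = 0 := by
  intro i l hlj hli hri
  rw [Matrix.mul_apply]
  refine Finset.sum_eq_zero fun b _ => ?_
  rcases lt_or_ge (l : Fin n) b with hb | hb
  · rw [hQ hb, mul_zero]
  · rw [Matrix.mul_apply]
    rw [show (∑ a, P i a * M a b) = 0 from ?_, zero_mul]
    refine Finset.sum_eq_zero fun a _ => ?_
    rcases lt_or_ge a i with ha | ha
    · rw [hP ha, zero_mul]
    · have hba : (b : ℕ) ≤ (l : ℕ) := hb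
      rw [h a b (by omega) (by omega) (by omega), mul_zero]

/-- If  `N = P * M * Q` and `M = P' * N * Q'` with all of `P, Q, P', Q'` upper triangular,
then `M` and `N` have the same staircase. -/
lemma staircase_eq_of_triangular {n : ℕ} {M N P Q P' Q' : Matrix (Fin n) (Fin n) ℂ}
    (hP : P.BlockTriangular id) (hQ : Q.BlockTriangular id)
    (hP' : P'.BlockTriangular id) (hQ' : Q'.BlockTriangular id)
    (hN : N = P * M * Q) (hM : M = P' * N * Q') (j : ℕ) :
    staircase N j = staircase M j := by
  refine le_antisymm ?_ ?_
  · rw [staircase_le_iff', hN]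
    exact zr_mul hP hQ j _ ((staircase_le_iff' M j _).mp le_rfl)
  · rw [staircase_le_iff', hM]
    exact zr_mul hP' hQ' j _ ((staircase_le_iff' N j _).mp le_rfl)

/-- If `Ahat = L (U + E Z*) R` with `L` a proper unitary `k`-lower Hessenberg matrix, `R` a
proper unitary `k`-upper Hessenberg matrix, `U = diag(I_k, Uhat)` with `Uhat` unitary, and the
last `k` rows of `Ahat` vanish, then the leading `n×n` principal submatrix `A` of `Ahat` is
nonsingular and has the same staircase profile as `Uhat`. -/
theorem staircase_of_bordered_LFR {n k : ℕ} (hk : 1 ≤ k)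
    (L R U F Ahat : Matrix (Fin (n + k)) (Fin (n + k)) ℂ)
    (Uhat : Matrix (Fin n) (Fin n) ℂ)
    (Z : Matrix (Fin (n + k)) (Fin k) ℂ)
    (A : Matrix (Fin n) (Fin n) ℂ)
    (hL : L ∈ Matrix.unitaryGroup (Fin (n + k)) ℂ)
    (hLHess : IsKLowerHessenberg k L)
    (hLproper : ∀ (j : ℕ) (h : j + k < n + k), L ⟨j, by omega⟩ ⟨j + k, h⟩ ≠ 0)
    (hR : R ∈ Matrix.unitaryGroup (Fin (n + k)) ℂ)
    (hRHess : IsKUpperHessenberg k R)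
    (hRproper : ∀ (j : ℕ) (h : j + k < n + k), R ⟨j + k, h⟩ ⟨j, by omega⟩ ≠ 0)
    (hUhat : Uhat ∈ Matrix.unitaryGroup (Fin n) ℂ)
    (hU : U = Matrix.of fun i j : Fin (n + k) =>
      if (i : ℕ) < k then (if (i : ℕ) = (j : ℕ) then (1 : ℂ) else 0)
      else if hjk : (j : ℕ) < k then 0
      else Uhat ⟨(i : ℕ) - k, by have := i.isLt; omega⟩ ⟨(j : ℕ) - k, by have := j.isLt; omega⟩)
    (hF : F = U + (Matrix.of fun (i : Fin (n + k)) (j : Fin k) =>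
      if (i : ℕ) = (j : ℕ) then (1 : ℂ) else 0) * Zᴴ)
    (hAhat : Ahat = L * F * R)
    (hlast : ∀ (i : Fin (n + k)) (j : Fin (n + k)), n ≤ (i : ℕ) → Ahat i j = 0)
    (hA : A = Ahat.submatrix (Fin.castAdd k) (Fin.castAdd k)) :
    IsUnit A.det ∧ ∀ j : ℕ, 1 ≤ j → j ≤ n → staircase A j = staircase Uhat j := by
  -- the two triangular factors
  set P : Matrix (Fin n) (Fin n) ℂ :=
    fun i l => star (L (Fin.castAdd k l) ⟨(i : ℕ) + k, by omega⟩) with hPdef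
  set R' : Matrix (Fin n) (Fin n) ℂ :=
    fun l j => R ⟨(l : ℕ) + k, by omega⟩ (Fin.castAdd k j) with hR'def
  have hPut : P.BlockTriangular id := by
    intro i l hli
    have hli' : (l : ℕ) < (i : ℕ) := hli
    have h1 : ((Fin.castAdd k l : Fin (n + k)) : ℕ) + k <
        ((⟨(i : ℕ) + k, by omega⟩ : Fin (n + k)) : ℕ) := by
      simp only [Fin.coe_castAdd, Fin.val_mk]; omega
    simp only [hPdef]
    rw [hLHess _ _ h1]
    simp
  have hR'ut : R'.BlockTriangular id := by
    intro l j hjl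
    have hjl' : (j : ℕ) < (l : ℕ) := hjl
    refine hRHess _ _ ?_
    simp only [Fin.coe_castAdd, Fin.val_mk]; omega
  have hPdiag : ∀ i : Fin n, P i i ≠ 0 := fun i => by
    simp only [hPdef, star_ne_zero]
    exact hLproper i (by omega)
  have hR'diag : ∀ i : Fin n, R' i i ≠ 0 := fun i => hRproper i (by omega)
  -- the key identity
  have key : P * A = Uhat * R' := by
    ext i j
    have step1 : (P * A) i j =
        ∑ l : Fin (n + k), star (L l ⟨(i : ℕ) + k, by omega⟩) * Ahat l (Fin.castAdd k j) := by
      rw [Fin.sum_univ_add, Matrix.mul_apply]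
      have : ∀ t : Fin k,
          star (L (Fin.natAdd n t) ⟨(i : ℕ) + k, by omega⟩) *
            Ahat (Fin.natAdd n t) (Fin.castAdd k j) = 0 := by
        intro t
        rw [hlast _ _ (by simp), mul_zero]
      rw [Finset.sum_eq_zero fun t _ => this t, add_zero]
      refine Finset.sum_congr rfl fun l _ => ?_
      rw [hA]
      rfl
    have step2 : (∑ l : Fin (n + k),
        star (L l ⟨(i : ℕ) + k, by omega⟩) * Ahat l (Fin.castAdd k j)) =
        (F * R) ⟨(i : ℕ) + k, by omega⟩ (Fin.castAdd k j) := by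
      have : F * R = Lᴴ * Ahat := by
        rw [hAhat, ← Matrix.mul_assoc, ← Matrix.mul_assoc, ← Matrix.star_eq_conjTranspose,
          hL.1, Matrix.one_mul]
      rw [this, Matrix.mul_apply]
      refine Finset.sum_congr rfl fun l _ => ?_
      rw [Matrix.conjTranspose_apply]
    have hFrow : ∀ l : Fin (n + k), F ⟨(i : ℕ) + k, by omega⟩ l =
        if h : (l : ℕ) < k then 0
        else Uhat i ⟨(l : ℕ) - k, by have := l.isLt; omega⟩ := by
      intro l
      rw [hF, Matrix.add_apply, hU]
      have hz : (Matrix.of fun (a : Fin (n + k)) (b : Fin k) =>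
          if (a : ℕ) = (b : ℕ) then (1 : ℂ) else 0) * Zᴴ = fun (a b : Fin (n + k)) =>
          ∑ t : Fin k, (if (a : ℕ) = (t : ℕ) then (1 : ℂ) else 0) * Zᴴ t b := by
        ext a b; rw [Matrix.mul_apply]; rfl
      rw [hz]
      simp only [Matrix.of_apply]
      rw [if_neg (by omega)]
      have : (∑ t : Fin k, (if ((⟨(i : ℕ) + k, by omega⟩ : Fin (n + k)) : ℕ) = (t : ℕ)
          then (1 : ℂ) else 0) * Zᴴ t l) = 0 := by
        refine Finset.sum_eq_zero fun t _ => ?_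
        rw [if_neg (by have := t.isLt; simp; omega), zero_mul]
      rw [this, add_zero]
      split_ifs with h
      · rfl
      · simp
    have step3 : (F * R) ⟨(i : ℕ) + k, by omega⟩ (Fin.castAdd k j) = (Uhat * R') i j := by
      rw [Matrix.mul_apply, Matrix.mul_apply]
      have hsum := Fintype.sum_equiv (finCongr (Nat.add_comm k n))
        (fun l : Fin (k + n) => F ⟨(i : ℕ) + k, by omega⟩ (finCongr (Nat.add_comm k n) l) *
          R (finCongr (Nat.add_comm k n) l) (Fin.castAdd k j))
        (fun l : Fin (n + k) => F ⟨(i : ℕ) + k, by omega⟩ l * R l (Fin.castAdd k j))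
        (fun l => rfl)
      rw [← hsum, Fin.sum_univ_add]
      have hz : ∀ t : Fin k, F ⟨(i : ℕ) + k, by omega⟩
          (finCongr (Nat.add_comm k n) (Fin.castAdd n t)) *
          R (finCongr (Nat.add_comm k n) (Fin.castAdd n t)) (Fin.castAdd k j) = 0 := by
        intro t
        rw [hFrow, dif_pos (by simp), zero_mul]
      rw [Finset.sum_eq_zero fun t _ => hz t, zero_add]
      refine Finset.sum_congr rfl fun l _ => ?_
      rw [hFrow, dif_neg (by simp)]
      congr 1
      · congr 1
        ext
        simp
      · congr 1
        ext
        simp [Nat.add_comm]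
    rw [step1, step2, step3]
  -- determinants
  have hPdet : IsUnit P.det := by
    rw [Matrix.det_of_upperTriangular hPut, isUnit_iff_ne_zero]
    exact Finset.prod_ne_zero_iff.mpr fun i _ => hPdiag i
  have hR'det : IsUnit R'.det := by
    rw [Matrix.det_of_upperTriangular hR'ut, isUnit_iff_ne_zero]
    exact Finset.prod_ne_zero_iff.mpr fun i _ => hR'diag i
  have hUdet : IsUnit Uhat.det := by
    have h1 : star Uhat * Uhat = 1 := hUhat.1
    have : Uhat.det * (star Uhat).det = 1 := by
      rw [mul_comm, ← Matrix.det_mul, h1, Matrix.det_one]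
    exact IsUnit.of_mul_eq_one _ this
  have hAdet : IsUnit A.det := by
    have := congrArg Matrix.det key
    rw [Matrix.det_mul, Matrix.det_mul] at this
    rw [isUnit_iff_ne_zero]
    intro h0
    rw [h0, mul_zero] at this
    exact (hUdet.mul hR'det).ne_zero this.symm
  refine ⟨hAdet, fun j _ _ => ?_⟩
  -- triangular inverses
  haveI : Invertible P := P.invertibleOfIsUnitDet hPdet
  haveI : Invertible R' := R'.invertibleOfIsUnitDet hR'det
  have hPinv : (P⁻¹).BlockTriangular id := Matrix.blockTriangular_inv_of_blockTriangular hPut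
  have hR'inv : (R'⁻¹).BlockTriangular id := Matrix.blockTriangular_inv_of_blockTriangular hR'ut
  have hAe : A = P⁻¹ * Uhat * R' := by
    rw [Matrix.mul_assoc, ← key, ← Matrix.mul_assoc, Matrix.nonsing_inv_mul P hPdet,
      Matrix.one_mul]
  have hUe : Uhat = P * A * R'⁻¹ := by
    rw [key, Matrix.mul_nonsing_inv_cancel_right _ _ hR'det]
  exact staircase_eq_of_triangular hPinv hR'ut hPut hR'inv hAe hUe j
end

section
/- Let B ∈ ℂ^{n×n}, let Q ∈ ℂ^{n×s} with Q*Q = I_s, and suppose BQ = U1 Σ1 V21* + U2 Σ2 V22* with U1, U2 ∈ ℂ^{n×s} satisfying U1*U1 = I_s, U2*U2 = I_s, U1*U2 = 0, Σ1, Σ2 ∈ ℝ^{s×s} real diagonal, and V21, V22 ∈ ℂ^{s×s}. Assume that Q* B* B Q is invertible and that ‖(Q* B* B Q)^{−1} V22 Σ2² V22*‖ < 1 in the spectral norm. Then V21 Σ1² V21* = Q* B* B Q ( I_s − (Q* B* B Q)^{−1} V22 Σ2² V22* ) is invertible, and in particular V21 is invertible. -/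
open Matrix
open scoped Matrix.Norms.L2Operator

/-- Under the SVD decomposition of `BQ`, if `Q* B* B Q` is invertible and
`‖(Q* B* B Q)⁻¹ V₂₂ Σ₂² V₂₂*‖ < 1` in the spectral norm, then
`V₂₁ Σ₁² V₂₁* = Q* B* B Q (I - (Q* B* B Q)⁻¹ V₂₂ Σ₂² V₂₂*)` is invertible; in particular
`V₂₁` is invertible. -/
theorem V21_invertible_of_small_tail {n s : ℕ}
    (B : Matrix (Fin n) (Fin n) ℂ) (Q U₁ U₂ : Matrix (Fin n) (Fin s) ℂ)
    (σ₁ σ₂ : Fin s → ℝ) (V₂₁ V₂₂ : Matrix (Fin s) (Fin s) ℂ)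
    (hQ : Qᴴ * Q = 1) (hU₁ : U₁ᴴ * U₁ = 1) (hU₂ : U₂ᴴ * U₂ = 1) (hU₁₂ : U₁ᴴ * U₂ = 0)
    (hBQ : B * Q = U₁ * Matrix.diagonal (fun i => (σ₁ i : ℂ)) * V₂₁ᴴ +
      U₂ * Matrix.diagonal (fun i => (σ₂ i : ℂ)) * V₂₂ᴴ)
    (hG : IsUnit (Qᴴ * Bᴴ * B * Q))
    (hsmall : ‖(Qᴴ * Bᴴ * B * Q)⁻¹ *
      (V₂₂ * Matrix.diagonal (fun i => (σ₂ i : ℂ)) ^ 2 * V₂₂ᴴ)‖ < 1) :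
    V₂₁ * Matrix.diagonal (fun i => (σ₁ i : ℂ)) ^ 2 * V₂₁ᴴ =
        Qᴴ * Bᴴ * B * Q *
          (1 - (Qᴴ * Bᴴ * B * Q)⁻¹ *
            (V₂₂ * Matrix.diagonal (fun i => (σ₂ i : ℂ)) ^ 2 * V₂₂ᴴ)) ∧
      IsUnit (V₂₁ * Matrix.diagonal (fun i => (σ₁ i : ℂ)) ^ 2 * V₂₁ᴴ) ∧
      IsUnit V₂₁ := by
  set D₁ := Matrix.diagonal (fun i => (σ₁ i : ℂ)) with hD₁
  set D₂ := Matrix.diagonal (fun i => (σ₂ i : ℂ)) with hD₂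
  have hU₂₁ : U₂ᴴ * U₁ = 0 := by
    have := congrArg conjTranspose hU₁₂
    simpa [conjTranspose_mul] using this
  have hD₁H : D₁ᴴ = D₁ := by
    simp [hD₁, diagonal_conjTranspose, Function.comp]
  have hD₂H : D₂ᴴ = D₂ := by
    simp [hD₂, diagonal_conjTranspose, Function.comp]
  have hGsum : Qᴴ * Bᴴ * B * Q = V₂₁ * D₁ ^ 2 * V₂₁ᴴ + V₂₂ * D₂ ^ 2 * V₂₂ᴴ := by
    have h1 : Qᴴ * Bᴴ * B * Q = (B * Q)ᴴ * (B * Q) := by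
      simp [conjTranspose_mul, Matrix.mul_assoc]
    rw [h1, hBQ]
    simp only [conjTranspose_add, conjTranspose_mul, hD₁H, hD₂H,
      conjTranspose_conjTranspose]
    rw [Matrix.add_mul, Matrix.mul_add, Matrix.mul_add]
    have e11 : V₂₁ * D₁ * U₁ᴴ * U₁ * D₁ * V₂₁ᴴ = V₂₁ * D₁ ^ 2 * V₂₁ᴴ := by
      calc V₂₁ * D₁ * U₁ᴴ * U₁ * D₁ * V₂₁ᴴ
          = V₂₁ * D₁ * (U₁ᴴ * U₁) * (D₁ * V₂₁ᴴ) := by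
            simp only [Matrix.mul_assoc]
        _ = V₂₁ * D₁ ^ 2 * V₂₁ᴴ := by
            rw [hU₁]; simp only [Matrix.mul_one, pow_two, Matrix.mul_assoc]
    have e22 : V₂₂ * D₂ * U₂ᴴ * U₂ * D₂ * V₂₂ᴴ = V₂₂ * D₂ ^ 2 * V₂₂ᴴ := by
      calc V₂₂ * D₂ * U₂ᴴ * U₂ * D₂ * V₂₂ᴴ
          = V₂₂ * D₂ * (U₂ᴴ * U₂) * (D₂ * V₂₂ᴴ) := by
            simp only [Matrix.mul_assoc]
        _ = V₂₂ * D₂ ^ 2 * V₂₂ᴴ := by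
            rw [hU₂]; simp only [Matrix.mul_one, pow_two, Matrix.mul_assoc]
    have e12 : V₂₁ * D₁ * U₁ᴴ * U₂ * D₂ * V₂₂ᴴ = 0 := by
      calc V₂₁ * D₁ * U₁ᴴ * U₂ * D₂ * V₂₂ᴴ
          = V₂₁ * D₁ * (U₁ᴴ * U₂) * (D₂ * V₂₂ᴴ) := by
            simp only [Matrix.mul_assoc]
        _ = 0 := by rw [hU₁₂]; simp
    have e21 : V₂₂ * D₂ * U₂ᴴ * U₁ * D₁ * V₂₁ᴴ = 0 := by
      calc V₂₂ * D₂ * U₂ᴴ * U₁ * D₁ * V₂₁ᴴ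
          = V₂₂ * D₂ * (U₂ᴴ * U₁) * (D₁ * V₂₁ᴴ) := by
            simp only [Matrix.mul_assoc]
        _ = 0 := by rw [hU₂₁]; simp
    simp only [← Matrix.mul_assoc]
    rw [e11, e22, e12, e21]
    abel
  set G := Qᴴ * Bᴴ * B * Q with hGdef
  set T := V₂₂ * D₂ ^ 2 * V₂₂ᴴ with hT
  have hGinv : G * G⁻¹ = 1 := Matrix.mul_nonsing_inv _ ((Matrix.isUnit_iff_isUnit_det _).mp hG)
  have heq : V₂₁ * D₁ ^ 2 * V₂₁ᴴ = G * (1 - G⁻¹ * T) := by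
    rw [Matrix.mul_sub, Matrix.mul_one, ← Matrix.mul_assoc, hGinv, Matrix.one_mul, hGsum]
    abel
  refine ⟨heq, ?_, ?_⟩
  · rw [heq]
    exact hG.mul (Units.oneSub _ hsmall).isUnit
  · have h : IsUnit (V₂₁ * D₁ ^ 2 * V₂₁ᴴ) := by
      rw [heq]; exact hG.mul (Units.oneSub _ hsmall).isUnit
    rw [Matrix.isUnit_iff_isUnit_det] at h
    rw [Matrix.isUnit_iff_isUnit_det]
    simp only [Matrix.det_mul] at h
    exact isUnit_of_mul_isUnit_left (isUnit_of_mul_isUnit_left h)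
end

section
/- Let A, B ∈ ℂ^{n×n}, let Q ∈ ℂ^{n×s} with Q*Q = I_s, and suppose AQ = U1 Σ1 V11* + U2 Σ2 V12* and BQ = U1 Σ1 V21* + U2 Σ2 V22*, where U1, U2 ∈ ℂ^{n×s} satisfy U1*U1 = I_s, U2*U2 = I_s, U1*U2 = 0, Σ1, Σ2 ∈ ℝ^{s×s} are real diagonal, and V11, V12, V21, V22 ∈ ℂ^{s×s} with V21 invertible. Define Λ = (V21*)^{−1} V11*, Δ_A = −U2 Σ2 V12* Q*, and Δ_B = −U2 Σ2 V22* Q*. Then (A + Δ_A) Q = (B + Δ_B) Q Λ. -/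
open Matrix

/-- Backward-error construction: with `AQ = U₁ Σ₁ V₁₁* + U₂ Σ₂ V₁₂*`,
`BQ = U₁ Σ₁ V₂₁* + U₂ Σ₂ V₂₂*`, `V₂₁` invertible, `Λ = (V₂₁*)⁻¹ V₁₁*`,
`Δ_A = -U₂ Σ₂ V₁₂* Q*` and `Δ_B = -U₂ Σ₂ V₂₂* Q*`, one has
`(A + Δ_A) Q = (B + Δ_B) Q Λ`. -/
theorem backward_error_identity {n s : ℕ}
    (A B : Matrix (Fin n) (Fin n) ℂ) (Q U₁ U₂ : Matrix (Fin n) (Fin s) ℂ)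
    (σ₁ σ₂ : Fin s → ℝ) (V₁₁ V₁₂ V₂₁ V₂₂ : Matrix (Fin s) (Fin s) ℂ)
    (hQ : Qᴴ * Q = 1) (hU₁ : U₁ᴴ * U₁ = 1) (hU₂ : U₂ᴴ * U₂ = 1) (hU₁₂ : U₁ᴴ * U₂ = 0)
    (hAQ : A * Q = U₁ * Matrix.diagonal (fun i => (σ₁ i : ℂ)) * V₁₁ᴴ +
      U₂ * Matrix.diagonal (fun i => (σ₂ i : ℂ)) * V₁₂ᴴ)
    (hBQ : B * Q = U₁ * Matrix.diagonal (fun i => (σ₁ i : ℂ)) * V₂₁ᴴ +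
      U₂ * Matrix.diagonal (fun i => (σ₂ i : ℂ)) * V₂₂ᴴ)
    (hV₂₁ : IsUnit V₂₁) :
    (A + -(U₂ * Matrix.diagonal (fun i => (σ₂ i : ℂ)) * V₁₂ᴴ * Qᴴ)) * Q =
      (B + -(U₂ * Matrix.diagonal (fun i => (σ₂ i : ℂ)) * V₂₂ᴴ * Qᴴ)) * Q *
        ((V₂₁ᴴ)⁻¹ * V₁₁ᴴ) := by
  have hVH : V₂₁ᴴ * (V₂₁ᴴ)⁻¹ = 1 :=
    Matrix.mul_nonsing_inv _
      ((Matrix.isUnit_iff_isUnit_det V₂₁ᴴ).mp ((Matrix.isUnit_conjTranspose V₂₁).mpr hV₂₁))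
  have h1 : (A + -(U₂ * Matrix.diagonal (fun i => (σ₂ i : ℂ)) * V₁₂ᴴ * Qᴴ)) * Q =
      U₁ * Matrix.diagonal (fun i => (σ₁ i : ℂ)) * V₁₁ᴴ := by
    rw [Matrix.add_mul, hAQ, Matrix.neg_mul, Matrix.mul_assoc _ Qᴴ Q, hQ, Matrix.mul_one]
    abel
  have h2 : (B + -(U₂ * Matrix.diagonal (fun i => (σ₂ i : ℂ)) * V₂₂ᴴ * Qᴴ)) * Q =
      U₁ * Matrix.diagonal (fun i => (σ₁ i : ℂ)) * V₂₁ᴴ := by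
    rw [Matrix.add_mul, hBQ, Matrix.neg_mul, Matrix.mul_assoc _ Qᴴ Q, hQ, Matrix.mul_one]
    abel
  rw [h1, h2, Matrix.mul_assoc _ V₂₁ᴴ, ← Matrix.mul_assoc V₂₁ᴴ, hVH, Matrix.one_mul]
end
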